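/- arXiv:2203.09008 — 3 statements merged into one kernel-verified Lean document; each statement's English description precedes it below -/
import Mathlib

section
/- With notation as before: the map Φ ↦ ψ_Φ is a group isomorphism from M (the preimage in Aut(F_n) of the normalizer N(Q) of Q in Out(F_n)) onto Aut⁰(E), the subgroup of Aut(E) consisting of automorphisms leaving Inn(F_n) ≅ F_n invariant, with inverse given by restriction Ψ ↦ Ψ|_{F_n} (identifying Inn(F_n) with F_n). -/
/-- Inner automorphisms form a normal subgroup of `MulAut G`. -/
instance innRangeNormal (G : Type*) [Group G] : (MulAut.conj : G →* MulAut G).range.Normal := by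
  constructor
  intro x hx Ψ
  obtain ⟨g, rfl⟩ := hx
  refine ⟨Ψ g, ?_⟩
  ext y
  simp [MulAut.conj_apply, MulAut.mul_apply, map_mul, map_inv]

/-- The outer automorphism group `Out(G) = Aut(G)/Inn(G)`. -/
abbrev OutGroup (G : Type*) [Group G] :=
  MulAut G ⧸ (MulAut.conj : G →* MulAut G).range

/-- The natural projection `Aut(G) → Out(G)`. -/
def outProj (G : Type*) [Group G] : MulAut G →* OutGroup G :=
  QuotientGroup.mk' _

private lemma cons_eq_append_replicate {β : Type*} :
    ∀ (l : List β) (x : β), x :: l = l ++ [x] → l = List.replicate l.length x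
  | [], _, _ => rfl
  | a :: t, x, h => by
    simp only [List.cons_append, List.cons.injEq] at h
    obtain ⟨hxa, h⟩ := h
    subst hxa
    have ih := cons_eq_append_replicate t x h
    simp [List.replicate_succ, ← ih]

private lemma mulAut_conj_conj {G : Type*} [Group G] (Φ : MulAut G) (f : G) :
    Φ * MulAut.conj f * Φ⁻¹ = MulAut.conj (Φ f) := by
  ext x
  simp [MulAut.conj_apply, MulAut.mul_apply, map_mul, map_inv]

private lemma freeGroup_conj_injective (n : ℕ) (hn : 2 ≤ n) :
    Function.Injective (MulAut.conj : FreeGroup (Fin n) →* MulAut (FreeGroup (Fin n))) := by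
  obtain ⟨m, rfl⟩ : ∃ m, n = m + 2 := ⟨n - 2, by omega⟩
  have key : ∀ z : FreeGroup (Fin (m + 2)), (∀ x, z * x = x * z) → z = 1 := by
    intro z hz
    by_contra hz1
    set w := z.toWord with hw
    have hwne : w ≠ [] := fun h => hz1 (FreeGroup.toWord_eq_nil_iff.mp h)
    obtain ⟨⟨i, bb⟩, tl, hwc⟩ := List.exists_cons_of_ne_nil hwne
    set j : Fin (m + 2) := if i = 0 then 1 else 0 with hj
    have hji : j ≠ i := by
      rcases eq_or_ne i 0 with h0 | h0
      · subst h0; simp [hj]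
      · simp [hj, h0]; exact Ne.symm h0
    have hred : FreeGroup.reduce w = w := z.reduce_toWord
    have h1 : (FreeGroup.of j * z).toWord = (j, true) :: w := by
      have hmk : FreeGroup.of j * z = FreeGroup.mk ((j, true) :: w) := by
        conv_lhs => rw [← FreeGroup.mk_toWord (x := FreeGroup.of j),
          ← FreeGroup.mk_toWord (x := z), FreeGroup.mul_mk]
        rw [FreeGroup.toWord_of]
        rfl
      rw [hmk, FreeGroup.toWord_mk, FreeGroup.reduce.cons, hred, hwc]
      simp [hji]
    have hcomm : FreeGroup.of j * z = z * FreeGroup.of j := (hz _).symm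
    have hsub : List.Sublist ((j, true) :: w) (w ++ [(j, true)]) := by
      rw [← h1, hcomm]
      have := FreeGroup.toWord_mul_sublist z (FreeGroup.of j)
      rwa [FreeGroup.toWord_of] at this
    have heq : ((j, true) :: w) = w ++ [(j, true)] :=
      hsub.eq_of_length (by simp)
    have hrep := cons_eq_append_replicate w (j, true) heq
    rw [hwc, List.length_cons, List.replicate_succ] at hrep
    injection hrep with hh _
    exact hji (congrArg Prod.fst hh).symm
  intro a b hab
  have hz : ∀ x : FreeGroup (Fin (m + 2)), (b⁻¹ * a) * x = x * (b⁻¹ * a) := by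
    intro x
    have h := congrArg (fun Φ : MulAut (FreeGroup (Fin (m + 2))) => Φ x) hab
    simp only [MulAut.conj_apply] at h
    have h2 : b⁻¹ * (a * x * a⁻¹) * a = b⁻¹ * (b * x * b⁻¹) * a := by rw [h]
    calc b⁻¹ * a * x = b⁻¹ * (a * x * a⁻¹) * a := by group
    _ = b⁻¹ * (b * x * b⁻¹) * a := h2
    _ = x * (b⁻¹ * a) := by group
  have := key _ hz
  rwa [inv_mul_eq_one, eq_comm] at this

/-- Let `Q ≤ Out(F_n)` be finite, `E ≤ Aut(F_n)` its full preimage, `M ≤ Aut(F_n)` the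
preimage of the normalizer of `Q`, and `Inn(F_n) ≤ E` (viewed as a subgroup `InnE` of `E`).
The map `Φ ↦ ψ_Φ` (where `ψ_Φ(e) = Φ e Φ⁻¹`) is a group isomorphism from `M` onto
`Aut⁰(E) = {Ψ ∈ Aut(E) : Ψ(Inn(F_n)) = Inn(F_n)}`, with inverse given by restriction
to `Inn(F_n) ≅ F_n` (i.e. `ψ_Φ(c_f) = c_{Φ(f)}`). -/
theorem conjugation_iso_M_aut0E
    (n : ℕ) (hn : 2 ≤ n) (Q : Subgroup (OutGroup (FreeGroup (Fin n)))) (hQ : Finite Q)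
    (E : Subgroup (MulAut (FreeGroup (Fin n)))) (hE : E = Q.comap (outProj _))
    (M : Subgroup (MulAut (FreeGroup (Fin n)))) (hM : M = (Subgroup.normalizer (Q : Set (OutGroup (FreeGroup (Fin n))))).comap (outProj _))
    (InnE : Subgroup E)
    (hInnE : InnE = ((MulAut.conj : FreeGroup (Fin n) →* MulAut (FreeGroup (Fin n))).range).subgroupOf E) :
    ∃ μ : M →* MulAut E,
      Function.Injective μ ∧
      (∀ (Φ : M) (e : E),
        ((μ Φ e : E) : MulAut (FreeGroup (Fin n))) =
          (Φ : MulAut (FreeGroup (Fin n))) * (e : MulAut (FreeGroup (Fin n))) *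
            (Φ : MulAut (FreeGroup (Fin n)))⁻¹) ∧
      (Set.range μ = {Ψ : MulAut E | InnE.map Ψ.toMonoidHom = InnE}) ∧
      (∀ (Φ : M) (f : FreeGroup (Fin n)) (hf : MulAut.conj f ∈ E),
        ((μ Φ ⟨MulAut.conj f, hf⟩ : E) : MulAut (FreeGroup (Fin n))) =
          MulAut.conj ((Φ : MulAut (FreeGroup (Fin n))) f)) := by
  have cinj := freeGroup_conj_injective n hn
  -- inner automorphisms lie in E
  have hconjE : ∀ f : FreeGroup (Fin n), MulAut.conj f ∈ E := by
    intro f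
    rw [hE, Subgroup.mem_comap]
    have h1 : outProj (FreeGroup (Fin n)) (MulAut.conj f) = 1 :=
      (QuotientGroup.eq_one_iff _).mpr ⟨f, rfl⟩
    rw [h1]; exact Q.one_mem
  -- M normalizes E
  have hnorm : ∀ Φ : MulAut (FreeGroup (Fin n)), Φ ∈ M →
      ∀ x ∈ E, Φ * x * Φ⁻¹ ∈ E := by
    intro Φ hΦ x hx
    rw [hM, Subgroup.mem_comap] at hΦ
    rw [hE, Subgroup.mem_comap] at hx ⊢
    rw [map_mul, map_mul, map_inv]
    exact (Subgroup.mem_normalizer_iff.mp hΦ _).mp hx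
  -- the homomorphism μ
  refine ⟨{
    toFun := fun Φ =>
      { toFun := fun e => ⟨(Φ : MulAut (FreeGroup (Fin n))) * (e : MulAut (FreeGroup (Fin n))) *
            (Φ : MulAut (FreeGroup (Fin n)))⁻¹, hnorm _ Φ.2 _ e.2⟩
        invFun := fun e => ⟨(Φ : MulAut (FreeGroup (Fin n)))⁻¹ * (e : MulAut (FreeGroup (Fin n))) *
            (Φ : MulAut (FreeGroup (Fin n))), by
          simpa using hnorm _ (inv_mem Φ.2) _ e.2⟩
        left_inv := fun e => Subtype.ext (by group)
        right_inv := fun e => Subtype.ext (by group)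
        map_mul' := fun e f => Subtype.ext (by
          push_cast
          group) }
    map_one' := by
      refine MulEquiv.ext fun e => Subtype.ext ?_
      show ((1 : M) : MulAut (FreeGroup (Fin n))) * (e : MulAut (FreeGroup (Fin n))) *
          ((1 : M) : MulAut (FreeGroup (Fin n)))⁻¹ = (e : MulAut (FreeGroup (Fin n)))
      simp
    map_mul' := fun Φ Φ' => by
      refine MulEquiv.ext fun e => Subtype.ext ?_
      show ((Φ * Φ' : M) : MulAut (FreeGroup (Fin n))) * (e : MulAut (FreeGroup (Fin n))) *
          ((Φ * Φ' : M) : MulAut (FreeGroup (Fin n)))⁻¹ =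
        (Φ : MulAut (FreeGroup (Fin n))) *
          ((Φ' : MulAut (FreeGroup (Fin n))) * (e : MulAut (FreeGroup (Fin n))) *
            (Φ' : MulAut (FreeGroup (Fin n)))⁻¹) * (Φ : MulAut (FreeGroup (Fin n)))⁻¹
      push_cast
      group }, ?_, fun Φ e => rfl, ?_, ?_⟩
  · -- injectivity
    intro Φ Φ' h
    have hext : ∀ f, (Φ : MulAut (FreeGroup (Fin n))) f = (Φ' : MulAut (FreeGroup (Fin n))) f := by
      intro f
      have he := congrArg
        (fun Ψ : MulAut E => ((Ψ ⟨MulAut.conj f, hconjE f⟩ : E) : MulAut (FreeGroup (Fin n)))) h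
      have he2 : (Φ : MulAut (FreeGroup (Fin n))) * MulAut.conj f *
            (Φ : MulAut (FreeGroup (Fin n)))⁻¹ =
          (Φ' : MulAut (FreeGroup (Fin n))) * MulAut.conj f *
            (Φ' : MulAut (FreeGroup (Fin n)))⁻¹ := he
      rw [mulAut_conj_conj, mulAut_conj_conj] at he2
      exact cinj he2
    exact Subtype.ext (MulEquiv.ext hext)
  · -- range characterization
    ext Ψ
    simp only [Set.mem_range, Set.mem_setOf_eq]
    constructor
    · rintro ⟨Φ, rfl⟩
      apply Subgroup.ext
      intro x
      rw [hInnE]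
      simp only [Subgroup.mem_map, Subgroup.mem_subgroupOf, MonoidHom.mem_range]
      constructor
      · rintro ⟨y, ⟨g, hg⟩, rfl⟩
        refine ⟨(Φ : MulAut _) g, ?_⟩
        show MulAut.conj _ = (Φ : MulAut (FreeGroup (Fin n))) * (y : MulAut (FreeGroup (Fin n))) * (Φ : MulAut (FreeGroup (Fin n)))⁻¹
        rw [← hg, mulAut_conj_conj]
      · rintro ⟨g, hg⟩
        refine ⟨⟨MulAut.conj ((Φ : MulAut _)⁻¹ g), hconjE _⟩, ⟨(Φ : MulAut _)⁻¹ g, rfl⟩, ?_⟩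
        refine Subtype.ext ?_
        show (Φ : MulAut _) * MulAut.conj ((Φ : MulAut _)⁻¹ g) * (Φ : MulAut _)⁻¹ = (x : MulAut _)
        rw [mulAut_conj_conj]
        simp [hg]
    · -- the hard direction
      intro hΨ
      -- the corestricted conjugation homomorphism
      set c : FreeGroup (Fin n) →* E :=
        (MulAut.conj : FreeGroup (Fin n) →* MulAut (FreeGroup (Fin n))).codRestrict E hconjE
        with hc
      have hcmem : ∀ f, c f ∈ InnE := by
        intro f
        rw [hInnE, Subgroup.mem_subgroupOf]
        exact ⟨f, rfl⟩
      have hΨinv : InnE.map (Ψ⁻¹ : MulAut E).toMonoidHom = InnE := by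
        conv_lhs => rw [← hΨ]
        rw [Subgroup.map_map]
        have : ((Ψ⁻¹ : MulAut E).toMonoidHom).comp Ψ.toMonoidHom = MonoidHom.id E := by
          ext e
          simp [MulAut.inv_def]
        rw [this, Subgroup.map_id]
      have hchoice : ∀ (Ψ' : MulAut E), InnE.map Ψ'.toMonoidHom = InnE →
          ∀ f, ∃ g, MulAut.conj g = ((Ψ' (c f) : E) : MulAut (FreeGroup (Fin n))) := by
        intro Ψ' hΨ' f
        have h1 : Ψ' (c f) ∈ InnE := by
          rw [← hΨ']
          exact ⟨c f, hcmem f, rfl⟩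
        rw [hInnE, Subgroup.mem_subgroupOf] at h1
        exact h1
      let φ : FreeGroup (Fin n) → FreeGroup (Fin n) :=
        fun f => (hchoice Ψ hΨ f).choose
      have φspec : ∀ f, MulAut.conj (φ f) = ((Ψ (c f) : E) : MulAut _) :=
        fun f => (hchoice Ψ hΨ f).choose_spec
      let φ' : FreeGroup (Fin n) → FreeGroup (Fin n) :=
        fun f => (hchoice Ψ⁻¹ hΨinv f).choose
      have φ'spec : ∀ f, MulAut.conj (φ' f) = ((Ψ⁻¹ (c f) : E) : MulAut _) :=
        fun f => (hchoice Ψ⁻¹ hΨinv f).choose_spec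
      have hcφ : ∀ f, c (φ f) = Ψ (c f) := fun f => Subtype.ext (φspec f)
      have hcφ' : ∀ f, c (φ' f) = Ψ⁻¹ (c f) := fun f => Subtype.ext (φ'spec f)
      have hφ'φ : ∀ f, φ' (φ f) = f := by
        intro f
        apply cinj
        calc MulAut.conj (φ' (φ f)) = ((Ψ⁻¹ (c (φ f)) : E) : MulAut _) := φ'spec _
          _ = ((Ψ⁻¹ (Ψ (c f)) : E) : MulAut _) := by rw [hcφ]
          _ = ((c f : E) : MulAut _) := by rw [MulAut.inv_def, MulEquiv.symm_apply_apply]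
          _ = MulAut.conj f := rfl
      have hφφ' : ∀ f, φ (φ' f) = f := by
        intro f
        apply cinj
        calc MulAut.conj (φ (φ' f)) = ((Ψ (c (φ' f)) : E) : MulAut _) := φspec _
          _ = ((Ψ (Ψ⁻¹ (c f)) : E) : MulAut _) := by rw [hcφ']
          _ = ((c f : E) : MulAut _) := by rw [MulAut.inv_def, MulEquiv.apply_symm_apply]
          _ = MulAut.conj f := rfl
      have φmul : ∀ f g, φ (f * g) = φ f * φ g := by
        intro f g
        apply cinj
        calc MulAut.conj (φ (f * g)) = ((Ψ (c (f * g)) : E) : MulAut _) := φspec _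
          _ = ((Ψ (c f) * Ψ (c g) : E) : MulAut _) := by rw [map_mul, map_mul]
          _ = ((Ψ (c f) : E) : MulAut _) * ((Ψ (c g) : E) : MulAut _) := rfl
          _ = MulAut.conj (φ f) * MulAut.conj (φ g) := by rw [φspec, φspec]
          _ = MulAut.conj (φ f * φ g) := (map_mul _ _ _).symm
      let Φ₀ : MulAut (FreeGroup (Fin n)) :=
        { toFun := φ, invFun := φ', left_inv := hφ'φ, right_inv := hφφ',
          map_mul' := φmul }
      have hΦ₀apply : ∀ f, Φ₀ f = φ f := fun f => rfl
      have hΦ₀inv : ∀ f, Φ₀⁻¹ f = φ' f := fun f => rfl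
      -- key conjugation identity
      have hkey : ∀ (e : E), ((Ψ e : E) : MulAut (FreeGroup (Fin n))) =
          Φ₀ * (e : MulAut _) * Φ₀⁻¹ := by
        intro e
        have key : ∀ f, φ ((e : MulAut _) f) = ((Ψ e : E) : MulAut _) (φ f) := by
          intro f
          apply cinj
          have hc1 : c ((e : MulAut _) f) = e * c f * e⁻¹ := by
            refine Subtype.ext ?_
            show MulAut.conj ((e : MulAut _) f) = ((e * c f * e⁻¹ : E) : MulAut _)
            rw [← mulAut_conj_conj (e : MulAut _) f]
            push_cast
            rfl
          calc MulAut.conj (φ ((e : MulAut _) f))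
              = ((Ψ (c ((e : MulAut _) f)) : E) : MulAut _) := φspec _
            _ = ((Ψ (e * c f * e⁻¹) : E) : MulAut _) := by rw [hc1]
            _ = ((Ψ e * Ψ (c f) * (Ψ e)⁻¹ : E) : MulAut _) := by
                rw [map_mul, map_mul, map_inv]
            _ = ((Ψ e : E) : MulAut _) * ((Ψ (c f) : E) : MulAut _) * ((Ψ e : E) : MulAut _)⁻¹ := by
                push_cast; rfl
            _ = ((Ψ e : E) : MulAut _) * MulAut.conj (φ f) * ((Ψ e : E) : MulAut _)⁻¹ := by
                rw [φspec]
            _ = MulAut.conj (((Ψ e : E) : MulAut _) (φ f)) := mulAut_conj_conj _ _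
        ext x
        rw [MulAut.mul_apply, MulAut.mul_apply, hΦ₀inv, hΦ₀apply, key, hφφ']
      -- Φ₀ conjugates E to E
      have hE' : ∀ x : MulAut (FreeGroup (Fin n)), x ∈ E ↔ Φ₀ * x * Φ₀⁻¹ ∈ E := by
        intro x
        constructor
        · intro hx
          rw [← hkey ⟨x, hx⟩]
          exact (Ψ ⟨x, hx⟩).2
        · intro hx
          have h1 := hkey (Ψ⁻¹ ⟨Φ₀ * x * Φ₀⁻¹, hx⟩)
          rw [show Ψ (Ψ⁻¹ ⟨Φ₀ * x * Φ₀⁻¹, hx⟩) = ⟨Φ₀ * x * Φ₀⁻¹, hx⟩ from by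
            rw [MulAut.inv_def, MulEquiv.apply_symm_apply]] at h1
          have h2 : x = ((Ψ⁻¹ ⟨Φ₀ * x * Φ₀⁻¹, hx⟩ : E) : MulAut _) := by
            have h1' : Φ₀ * x * Φ₀⁻¹ =
                Φ₀ * ((Ψ⁻¹ ⟨Φ₀ * x * Φ₀⁻¹, hx⟩ : E) : MulAut _) * Φ₀⁻¹ := h1
            exact mul_left_cancel (mul_right_cancel h1')
          rw [h2]
          exact (Ψ⁻¹ ⟨Φ₀ * x * Φ₀⁻¹, hx⟩).2
      -- Φ₀ ∈ M
      have hΦ₀M : Φ₀ ∈ M := by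
        rw [hM, Subgroup.mem_comap, Subgroup.mem_normalizer_iff]
        intro q
        obtain ⟨x, rfl⟩ := QuotientGroup.mk'_surjective _ q
        have heq1 : outProj (FreeGroup (Fin n)) Φ₀ * (QuotientGroup.mk' _ x) *
            (outProj (FreeGroup (Fin n)) Φ₀)⁻¹ = outProj _ (Φ₀ * x * Φ₀⁻¹) := by
          rw [map_mul, map_mul, map_inv]; rfl
        rw [heq1]
        have h3 := hE' x
        rw [hE, Subgroup.mem_comap, Subgroup.mem_comap] at h3
        exact h3
      refine ⟨⟨Φ₀, hΦ₀M⟩, ?_⟩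
      refine MulEquiv.ext fun e => Subtype.ext ?_
      exact (hkey e).symm
  · -- the formula on inner automorphisms
    intro Φ f hf
    show (Φ : MulAut (FreeGroup (Fin n))) * MulAut.conj f *
        (Φ : MulAut (FreeGroup (Fin n)))⁻¹ =
      MulAut.conj ((Φ : MulAut (FreeGroup (Fin n))) f)
    exact mulAut_conj_conj _ f
end

section
/- Let G ≤ Out(F_n) be a finite subgroup, E its preimage in Aut(F_n), N(G) the normalizer of G in Out(F_n), and Out⁰(E) the image in Out(E) of the automorphisms of E leaving Inn(F_n) invariant. Then there is a short exact sequence 1 → G → N(G) → Out⁰(E) → 1. -/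
open FreeGroup in
lemma myReduceCons {α : Type*} [DecidableEq α] (e : α × Bool) (w : List (α × Bool))
    (hw : FreeGroup.reduce w = w)
    (h : ∀ hd ∈ w.head?, ¬ (e.1 = hd.1 ∧ e.2 = !hd.2)) :
    FreeGroup.reduce (e :: w) = e :: w := by
  rw [FreeGroup.reduce.cons, hw]
  cases w with
  | nil => rfl
  | cons hd tl =>
    simp only [List.head?_cons, Option.mem_some_iff, forall_eq] at h
    simp [if_neg (h _ rfl)]

lemma myRep {α : Type*} (c : α) (L : List α) (h : c :: L = L ++ [c]) :
    L = List.replicate L.length c := by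
  induction L with
  | nil => rfl
  | cons hd tl ih =>
    simp only [List.cons_append, List.cons.injEq] at h
    obtain ⟨rfl, h2⟩ := h
    simpa [List.replicate_succ] using ih h2

lemma myCenter {α : Type*} [DecidableEq α] (a b : α) (hab : a ≠ b) (x : FreeGroup α)
    (hx : ∀ g : FreeGroup α, g * x = x * g) : x = 1 := by
  by_contra hx1
  have hw : x.toWord ≠ [] := fun h => hx1 (FreeGroup.toWord_eq_nil_iff.mp h)
  set w := x.toWord with hwdef
  have hred : FreeGroup.reduce w = w := FreeGroup.reduce_toWord x
  have hwinv : FreeGroup.invRev w ≠ [] := by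
    intro h
    apply hw
    have := congrArg FreeGroup.invRev h
    rwa [FreeGroup.invRev_invRev] at this
  have hredinv : FreeGroup.reduce (FreeGroup.invRev w) = FreeGroup.invRev w := by
    rw [FreeGroup.reduce_invRev, hred]
  -- main claim
  have key : ∀ e : α × Bool, e ≠ ((w.head hw).1, !(w.head hw).2) →
      e ≠ (FreeGroup.invRev w).head hwinv → w.head hw = e := by
    intro e he1 he2
    set eb : α × Bool := (e.1, !e.2) with hebdef
    -- mk [e] * x  has word  e :: w
    have hx' : FreeGroup.mk [e] * x = x * FreeGroup.mk [e] := hx _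
    have t1 : (FreeGroup.mk [e] * x).toWord = e :: w := by
      conv_lhs => rw [← FreeGroup.mk_toWord (x := x)]
      rw [FreeGroup.mul_mk, FreeGroup.toWord_mk,
        show [e] ++ w = e :: w from rfl]
      refine myReduceCons e w hred ?_
      intro hd hhd
      rw [List.head?_eq_head hw, Option.mem_some_iff] at hhd
      subst hhd
      intro ⟨h1, h2⟩
      exact he1 (Prod.ext h1 h2)
    -- (mk [e] * x)⁻¹ = mk [eb] * x⁻¹
    have hinv1 : (FreeGroup.mk [e] * x)⁻¹ = FreeGroup.mk [eb] * x⁻¹ := by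
      rw [mul_inv_rev]
      have : (FreeGroup.mk [e])⁻¹ = FreeGroup.mk [eb] := by
        rw [FreeGroup.inv_mk]; rfl
      rw [this]
      -- x⁻¹ commutes with mk [eb]
      have := hx (FreeGroup.mk [eb])
      calc x⁻¹ * FreeGroup.mk [eb] = x⁻¹ * (FreeGroup.mk [eb] * x) * x⁻¹ := by group
        _ = x⁻¹ * (x * FreeGroup.mk [eb]) * x⁻¹ := by rw [this]
        _ = FreeGroup.mk [eb] * x⁻¹ := by group
    have t2 : (FreeGroup.mk [eb] * x⁻¹).toWord = eb :: FreeGroup.invRev w := by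
      have hxw : x⁻¹.toWord = FreeGroup.invRev w := by rw [FreeGroup.toWord_inv]
      conv_lhs => rw [← FreeGroup.mk_toWord (x := x⁻¹)]
      rw [FreeGroup.mul_mk, FreeGroup.toWord_mk, hxw,
        show [eb] ++ FreeGroup.invRev w = eb :: FreeGroup.invRev w from rfl]
      refine myReduceCons eb _ hredinv ?_
      intro hd hhd
      rw [List.head?_eq_head hwinv, Option.mem_some_iff] at hhd
      subst hhd
      intro ⟨h1, h2⟩
      apply he2
      refine Prod.ext h1 ?_
      simpa [hebdef] using congrArg Bool.not h2
    have t3 : (FreeGroup.mk [e] * x)⁻¹.toWord = FreeGroup.invRev w ++ [eb] := by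
      rw [FreeGroup.toWord_inv, t1]
      simp [FreeGroup.invRev, hebdef]
    rw [hinv1, t2] at t3
    -- so eb :: invRev w = invRev w ++ [eb]
    have hrep := myRep eb (FreeGroup.invRev w) t3
    -- hence w = replicate _ e
    have hwrep : w = List.replicate (FreeGroup.invRev w).length e := by
      have := congrArg FreeGroup.invRev hrep
      rw [FreeGroup.invRev_invRev] at this
      rw [this]
      simp [FreeGroup.invRev, hebdef, List.map_replicate]
    have hh : w.head? = some e := by
      rw [hwrep, List.head?_replicate]
      rw [if_neg]
      intro h0
      rw [FreeGroup.invRev_length] at h0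
      exact hw (List.length_eq_zero_iff.mp h0)
    rw [List.head?_eq_head hw] at hh
    exact Option.some.inj hh
  -- now pick two distinct letters satisfying the constraints
  set u : α × Bool := ((w.head hw).1, !(w.head hw).2) with hu
  set v : α × Bool := (FreeGroup.invRev w).head hwinv with hv
  have : ∃ e1 e2 : α × Bool, e1 ≠ e2 ∧ e1 ≠ u ∧ e1 ≠ v ∧ e2 ≠ u ∧ e2 ≠ v := by
    classical
    have h4 : ({(a, true), (a, false), (b, true), (b, false)} : Finset (α × Bool)).card = 4 := by
      rw [Finset.card_insert_of_notMem (by simp [hab]), Finset.card_insert_of_notMem (by simp [hab]),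
        Finset.card_insert_of_notMem (by simp), Finset.card_singleton]
    have h1 := Finset.le_card_sdiff ({u, v} : Finset (α × Bool))
      ({(a, true), (a, false), (b, true), (b, false)} : Finset (α × Bool))
    have h2 : ({u, v} : Finset (α × Bool)).card ≤ 2 := by
      apply le_trans (Finset.card_insert_le _ _); simp
    rw [h4] at h1
    obtain ⟨e1, he1, e2, he2, hne⟩ := Finset.one_lt_card.mp
      (lt_of_lt_of_le one_lt_two (le_trans (by omega) h1))
    simp only [Finset.mem_sdiff, Finset.mem_insert, Finset.mem_singleton] at he1 he2
    exact ⟨e1, e2, hne, fun h => he1.2 (Or.inl h), fun h => he1.2 (Or.inr h),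
      fun h => he2.2 (Or.inl h), fun h => he2.2 (Or.inr h)⟩
  obtain ⟨e1, e2, hne, h1u, h1v, h2u, h2v⟩ := this
  exact hne ((key e1 h1u h1v).symm.trans (key e2 h2u h2v))



def conjHom {H : Type*} [Group H] (K : Subgroup H) : Subgroup.normalizer (K : Set H) →* MulAut K where
  toFun m :=
    { toFun := fun e => ⟨(m : H) * e * (m : H)⁻¹, (Subgroup.mem_normalizer_iff.mp m.2 e).mp e.2⟩
      invFun := fun e => ⟨(m : H)⁻¹ * e * (m : H), by
        have := (Subgroup.mem_normalizer_iff.mp (inv_mem m.2) (e : H)).mp e.2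
        simpa using this⟩
      left_inv := fun e => by ext; simp [mul_assoc]
      right_inv := fun e => by ext; simp [mul_assoc]
      map_mul' := fun e f => by ext; simp [mul_assoc] }
  map_one' := by ext e; simp
  map_mul' m n := by ext e; simp [mul_assoc]

lemma conjHom_apply_coe {H : Type*} [Group H] (K : Subgroup H) (m : Subgroup.normalizer (K : Set H)) (e : K) :
    ((conjHom K m e : K) : H) = (m : H) * e * (m : H)⁻¹ := rfl

section Main

variable {α : Type*}



lemma conjConjAut {H : Type*} [Group H] (m : MulAut H) (f : H) :
    m * MulAut.conj f * m⁻¹ = MulAut.conj (m f) := by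
  ext y
  simp [MulAut.conj_apply, MulAut.mul_apply, map_mul, map_inv]

/-- Let `E ≤ Aut(F_n)` be the full preimage of a finite subgroup `G ≤ Out(F_n)`,
`N(G)` the normalizer of `G` in `Out(F_n)`, and `Out⁰(E)` the image in `Out(E)` of the
automorphisms of `E` leaving `Inn(F_n)` invariant.  Then there is a short exact sequence
`1 → G → N(G) → Out⁰(E) → 1`: i.e. there is a homomorphism `φ : N(G) → Out(E)` with
kernel `G` and image exactly `Out⁰(E)`. -/
theorem normalizer_ses
    (n : ℕ) (hn : 2 ≤ n) (G : Subgroup (OutGroup (FreeGroup (Fin n)))) (hG : Finite G)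
    (E : Subgroup (MulAut (FreeGroup (Fin n)))) (hE : E = G.comap (outProj _))
    (InnE : Subgroup E)
    (hInnE : InnE = ((MulAut.conj : FreeGroup (Fin n) →* MulAut (FreeGroup (Fin n))).range).subgroupOf E) :
    ∃ φ : Subgroup.normalizer (G : Set (OutGroup (FreeGroup (Fin n)))) →* OutGroup E,
      φ.ker = G.subgroupOf (Subgroup.normalizer (G : Set (OutGroup (FreeGroup (Fin n))))) ∧
      Set.range φ = (outProj E) '' {Ψ : MulAut E | InnE.map Ψ.toMonoidHom = InnE} := by
  obtain ⟨k, rfl⟩ : ∃ k, n = k + 2 := ⟨n - 2, by omega⟩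
  set F := FreeGroup (Fin (k + 2)) with hF
  -- basic facts
  have hab : (0 : Fin (k + 2)) ≠ 1 := fun h => absurd (congrArg Fin.val h) (by simp)
  have hcenter : ∀ x : F, (∀ g : F, g * x = x * g) → x = 1 := myCenter 0 1 hab
  have conj_inj : Function.Injective (MulAut.conj : F →* MulAut F) := by
    intro f g h
    have h' : ∀ y : F, f * y * f⁻¹ = g * y * g⁻¹ := by
      intro y
      have := MulEquiv.ext_iff.mp (congrArg MulEquiv.toEquiv h |> fun _ => h) y
      simpa [MulAut.conj_apply] using this
    have hz : ∀ y : F, (g⁻¹ * f) * y = y * (g⁻¹ * f) := by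
      intro y
      calc (g⁻¹ * f) * y = g⁻¹ * (f * y * f⁻¹) * f := by simp [mul_assoc]
        _ = g⁻¹ * (g * y * g⁻¹) * f := by rw [h' y]
        _ = y * (g⁻¹ * f) := by simp [mul_assoc]
    have := hcenter _ fun y => (hz y).symm
    -- this : g⁻¹ * f = 1
    have := inv_mul_eq_one.mp this
    exact this.symm
  have memE : ∀ m : MulAut F, m ∈ E ↔ outProj F m ∈ G := by
    intro m; rw [hE]; exact Iff.rfl
  have memInnE : ∀ e : E, e ∈ InnE ↔ (e : MulAut F) ∈ (MulAut.conj : F →* MulAut F).range := by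
    intro e; rw [hInnE]; exact Iff.rfl
  have hIE : ∀ f : F, MulAut.conj f ∈ E := fun f =>
    (memE _).mpr (by rw [show outProj F (MulAut.conj f) = 1 from (QuotientGroup.eq_one_iff _).mpr ⟨f, rfl⟩]; exact G.one_mem)
  set M : Subgroup (MulAut F) := Subgroup.comap (outProj F) (Subgroup.normalizer (G : Set (OutGroup F))) with hM
  have hME : M ≤ Subgroup.normalizer (E : Set (MulAut F)) := by
    intro m hm
    rw [Subgroup.mem_normalizer_iff]
    intro h
    rw [memE, memE, map_mul, map_mul, map_inv]
    exact Subgroup.mem_normalizer_iff.mp hm (outProj F h)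
  set ψ : M →* OutGroup E := (outProj E).comp ((conjHom E).comp (Subgroup.inclusion hME)) with hψ
  set π : M →* Subgroup.normalizer (G : Set (OutGroup F)) :=
    MonoidHom.codRestrict ((outProj F).domRestrict M) (Subgroup.normalizer (G : Set (OutGroup F))) (fun m => m.2) with hπdef
  have hπs : Function.Surjective π := by
    rintro ⟨x, hx⟩
    obtain ⟨m, rfl⟩ := QuotientGroup.mk'_surjective _ x
    exact ⟨⟨m, hx⟩, rfl⟩
  -- ψ kills elements of E
  have hinner : ∀ m : M, (m : MulAut F) ∈ E → ψ m = 1 := by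
    intro m hm
    have hc : conjHom E (Subgroup.inclusion hME m) = MulAut.conj (⟨(m : MulAut F), hm⟩ : E) := by
      ext e
      rfl
    show outProj E (conjHom E (Subgroup.inclusion hME m)) = 1
    rw [hc]
    exact (QuotientGroup.eq_one_iff _).mpr ⟨_, rfl⟩
  have hkerle : π.ker ≤ ψ.ker := by
    intro m hm
    have h1 : outProj F (m : MulAut F) = 1 := congrArg Subtype.val hm
    obtain ⟨f, hf⟩ := (QuotientGroup.eq_one_iff _).mp h1
    exact hinner m (hf ▸ hIE f)
  -- construct φ
  set φ : Subgroup.normalizer (G : Set (OutGroup F)) →* OutGroup E :=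
    (QuotientGroup.lift π.ker ψ hkerle).comp
      (QuotientGroup.quotientKerEquivOfSurjective π hπs).symm.toMonoidHom with hφ
  have hφeval : ∀ m : M, φ (π m) = ψ m := by
    intro m
    have h1 : (QuotientGroup.quotientKerEquivOfSurjective π hπs) (QuotientGroup.mk m) = π m := rfl
    have h2 : (QuotientGroup.quotientKerEquivOfSurjective π hπs).symm (π m) = QuotientGroup.mk m := by
      rw [← h1, MulEquiv.symm_apply_apply]
    rw [hφ]
    show (QuotientGroup.lift π.ker ψ hkerle) ((QuotientGroup.quotientKerEquivOfSurjective π hπs).symm (π m)) = ψ m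
    rw [h2]
    rfl
  refine ⟨φ, ?_, ?_⟩
  · -- kernel
    ext x
    rw [MonoidHom.mem_ker, Subgroup.mem_subgroupOf]
    obtain ⟨m, rfl⟩ := hπs x
    constructor
    · intro h0
      rw [hφeval] at h0
      have h1 : conjHom E (Subgroup.inclusion hME m) ∈ (MulAut.conj : E →* MulAut E).range :=
        (QuotientGroup.eq_one_iff _).mp h0
      obtain ⟨e, he⟩ := h1
      have h2 : ∀ f : F, (e : MulAut F) f = (m : MulAut F) f := by
        intro f
        have h3 := congrArg (fun ρ : MulAut E => ((ρ ⟨MulAut.conj f, hIE f⟩ : E) : MulAut F)) he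
        have h4 : (e : MulAut F) * MulAut.conj f * (e : MulAut F)⁻¹
            = (m : MulAut F) * MulAut.conj f * (m : MulAut F)⁻¹ := by
          simpa [MulAut.conj_apply, conjHom_apply_coe] using h3
        apply conj_inj
        rw [← conjConjAut, ← conjConjAut, h4]
      have h5 : (m : MulAut F) ∈ E := by
        have he' : (e : MulAut F) = (m : MulAut F) := MulEquiv.ext h2
        rw [← he']; exact e.2
      exact (memE _).mp h5
    · intro h0
      rw [hφeval]
      exact hinner m ((memE _).mpr h0)
  · -- range
    ext q
    simp only [Set.mem_range, Set.mem_image, Set.mem_setOf_eq]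
    constructor
    · rintro ⟨x, rfl⟩
      obtain ⟨m, rfl⟩ := hπs x
      rw [hφeval]
      refine ⟨conjHom E (Subgroup.inclusion hME m), ?_, rfl⟩
      apply le_antisymm
      · rintro x hx
        rw [Subgroup.mem_map] at hx
        obtain ⟨e, he, rfl⟩ := hx
        rw [memInnE] at he
        obtain ⟨f, hf⟩ := he
        rw [memInnE]
        refine ⟨(m : MulAut F) f, ?_⟩
        show MulAut.conj ((m : MulAut F) f) = ((conjHom E (Subgroup.inclusion hME m) e : E) : MulAut F)
        rw [conjHom_apply_coe, ← hf]
        exact (conjConjAut _ f).symm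
      · intro e he
        rw [Subgroup.mem_map]
        refine ⟨(conjHom E (Subgroup.inclusion hME m)).symm e, ?_,
          (conjHom E (Subgroup.inclusion hME m)).apply_symm_apply e⟩
        rw [memInnE] at he
        obtain ⟨f, hf⟩ := he
        rw [memInnE]
        refine ⟨(m : MulAut F)⁻¹ f, ?_⟩
        show MulAut.conj ((m : MulAut F)⁻¹ f)
            = (((conjHom E (Subgroup.inclusion hME m)).symm e : E) : MulAut F)
        have hcoe : (((conjHom E (Subgroup.inclusion hME m)).symm e : E) : MulAut F)
            = (m : MulAut F)⁻¹ * (e : MulAut F) * (m : MulAut F) := rfl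
        rw [hcoe, ← hf]
        have := conjConjAut (m : MulAut F)⁻¹ f
        simpa using this.symm
    · rintro ⟨Ψ, hΨ, rfl⟩
      -- the hard direction
      have hΨmem : ∀ e : E, e ∈ InnE → Ψ e ∈ InnE := by
        intro e he
        have hmm := Subgroup.mem_map_of_mem Ψ.toMonoidHom he
        rw [hΨ] at hmm
        exact hmm
      have hΨsymmem : ∀ e : E, e ∈ InnE → Ψ.symm e ∈ InnE := by
        intro e he
        rw [← hΨ, Subgroup.mem_map] at he
        obtain ⟨y, hy, rfl⟩ := he
        rw [show Ψ.toMonoidHom y = Ψ y from rfl, Ψ.symm_apply_apply]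
        exact hy
      set jE : F → E := fun f => ⟨MulAut.conj f, hIE f⟩ with hjE
      have jInn : ∀ f : F, jE f ∈ InnE := fun f => (memInnE _).mpr ⟨f, rfl⟩
      have hex : ∀ f : F, ∃ g : F, ((Ψ (jE f) : E) : MulAut F) = MulAut.conj g := by
        intro f
        have := (memInnE _).mp (hΨmem (jE f) (jInn f))
        obtain ⟨g, hg⟩ := this
        exact ⟨g, hg.symm⟩
      choose α0 hα0 using hex
      have hex' : ∀ f : F, ∃ g : F, ((Ψ.symm (jE f) : E) : MulAut F) = MulAut.conj g := by
        intro f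
        have := (memInnE _).mp (hΨsymmem (jE f) (jInn f))
        obtain ⟨g, hg⟩ := this
        exact ⟨g, hg.symm⟩
      choose β0 hβ0 using hex'
      have hβα : ∀ f : F, β0 (α0 f) = f := by
        intro f
        apply conj_inj
        calc MulAut.conj (β0 (α0 f)) = ((Ψ.symm (jE (α0 f)) : E) : MulAut F) := (hβ0 _).symm
          _ = ((Ψ.symm (Ψ (jE f)) : E) : MulAut F) := by
              rw [show jE (α0 f) = Ψ (jE f) from Subtype.ext (hα0 f).symm]
          _ = MulAut.conj f := by rw [Ψ.symm_apply_apply]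
      have hαβ : ∀ f : F, α0 (β0 f) = f := by
        intro f
        apply conj_inj
        calc MulAut.conj (α0 (β0 f)) = ((Ψ (jE (β0 f)) : E) : MulAut F) := (hα0 _).symm
          _ = ((Ψ (Ψ.symm (jE f)) : E) : MulAut F) := by
              rw [show jE (β0 f) = Ψ.symm (jE f) from Subtype.ext (hβ0 f).symm]
          _ = MulAut.conj f := by rw [Ψ.apply_symm_apply]
      have hαmul : ∀ f g : F, α0 (f * g) = α0 f * α0 g := by
        intro f g
        apply conj_inj
        have hjmul : jE (f * g) = jE f * jE g := Subtype.ext (by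
          show MulAut.conj (f * g) = MulAut.conj f * MulAut.conj g
          rw [map_mul])
        calc MulAut.conj (α0 (f * g)) = ((Ψ (jE (f * g)) : E) : MulAut F) := (hα0 _).symm
          _ = ((Ψ (jE f) * Ψ (jE g) : E) : MulAut F) := by rw [hjmul, map_mul]
          _ = MulAut.conj (α0 f) * MulAut.conj (α0 g) := by
              rw [Subgroup.coe_mul, hα0, hα0]
          _ = MulAut.conj (α0 f * α0 g) := by rw [map_mul]
      set α : MulAut F :=
        { toFun := α0, invFun := β0, left_inv := hβα, right_inv := hαβ,
          map_mul' := hαmul } with hα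
      have hαapp : ∀ f : F, α f = α0 f := fun f => rfl
      have hαinvapp : ∀ f : F, (α⁻¹ : MulAut F) f = β0 f := fun f => rfl
      have hstep : ∀ (e : E) (f : F), α0 ((e : MulAut F) f) = ((Ψ e : E) : MulAut F) (α0 f) := by
        intro e f
        apply conj_inj
        have hje : jE ((e : MulAut F) f) = e * jE f * e⁻¹ := by
          apply Subtype.ext
          show MulAut.conj ((e : MulAut F) f)
            = (e : MulAut F) * MulAut.conj f * (e : MulAut F)⁻¹
          exact (conjConjAut _ f).symm
        calc MulAut.conj (α0 ((e : MulAut F) f))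
            = ((Ψ (jE ((e : MulAut F) f)) : E) : MulAut F) := (hα0 _).symm
          _ = ((Ψ e * Ψ (jE f) * (Ψ e)⁻¹ : E) : MulAut F) := by
              rw [hje, map_mul, map_mul, map_inv]
          _ = ((Ψ e : E) : MulAut F) * MulAut.conj (α0 f) * ((Ψ e : E) : MulAut F)⁻¹ := by
              rw [Subgroup.coe_mul, Subgroup.coe_mul, Subgroup.coe_inv, hα0]
          _ = MulAut.conj (((Ψ e : E) : MulAut F) (α0 f)) := conjConjAut _ _
      have hkey : ∀ e : E, ((Ψ e : E) : MulAut F) = α * (e : MulAut F) * α⁻¹ := by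
        intro e
        apply MulEquiv.ext
        intro y
        rw [MulAut.mul_apply, MulAut.mul_apply, hαinvapp, hαapp]
        have h6 := hstep e (β0 y)
        rw [hαβ y] at h6
        exact h6.symm
      have hαinvE : ∀ e : E, α⁻¹ * (e : MulAut F) * α ∈ E := by
        intro e
        have h7 := hkey (Ψ.symm e)
        rw [Ψ.apply_symm_apply] at h7
        have h8 : α⁻¹ * (e : MulAut F) * α = ((Ψ.symm e : E) : MulAut F) := by
          rw [h7]; group
        rw [h8]
        exact (Ψ.symm e).2
      have hαM : α ∈ M := by
        rw [hM, Subgroup.mem_comap]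
        rw [Subgroup.mem_normalizer_iff]
        intro h
        obtain ⟨m, rfl⟩ := QuotientGroup.mk'_surjective _ h
        constructor
        · intro hh
          have hmE : m ∈ E := (memE m).mpr hh
          have : outProj F α * outProj F m * (outProj F α)⁻¹ = outProj F (α * m * α⁻¹) := by
            rw [map_mul, map_mul, map_inv]
          rw [show (QuotientGroup.mk' _ m : OutGroup F) = outProj F m from rfl, this]
          rw [show α * m * α⁻¹ = ((Ψ ⟨m, hmE⟩ : E) : MulAut F) from (hkey ⟨m, hmE⟩).symm]
          exact (memE _).mp (Ψ ⟨m, hmE⟩).2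
        · intro hh
          have h9 : α * m * α⁻¹ ∈ E := by
            rw [memE, map_mul, map_mul, map_inv]
            exact hh
          have h10 := hαinvE ⟨_, h9⟩
          have h11 : α⁻¹ * (α * m * α⁻¹) * α = m := by group
          rw [h11] at h10
          exact (memE _).mp h10
      refine ⟨π ⟨α, hαM⟩, ?_⟩
      rw [hφeval]
      show outProj E (conjHom E (Subgroup.inclusion hME ⟨α, hαM⟩)) = outProj E Ψ
      congr 1
      apply MulEquiv.ext
      intro e
      apply Subtype.ext
      rw [conjHom_apply_coe]
      exact (hkey e).symm

end Main
end

section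
/- Orbit-counting identity for finite-index subgroups: let F act on a set X with finite stabilizers, let H ≤ F have finite index n, and let O = F·x be a single F-orbit. Then Σ 1/|Stab_H(y)| over a set of representatives y of the H-orbits contained in O equals n/|Stab_F(x)|. -/
/-- Orbit-counting identity for finite-index subgroups: if `F` acts on `X` with finite
stabilizers, `H ≤ F` has finite index `n`, and `R` is a set of representatives of the
`H`-orbits contained in the single `F`-orbit of `x`, then
`Σ_{e ∈ R} 1/|Stab_H(e)| = n/|Stab_F(x)|`. -/
theorem orbit_counting_finite_index
    {F : Type*} [Group F] {X : Type*} [MulAction F X]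
    (hstab : ∀ y : X, Finite (MulAction.stabilizer F y))
    (H : Subgroup F) (n : ℕ) (hn : H.index = n) (hn0 : n ≠ 0)
    (x : X) (R : Finset X)
    (hRorb : ∀ e ∈ R, e ∈ MulAction.orbit F x)
    (hR : ∀ y ∈ MulAction.orbit F x, ∃! e, e ∈ R ∧ y ∈ MulAction.orbit H e) :
    ∑ e ∈ R, (1 : ℝ) / (Nat.card (MulAction.stabilizer H e)) =
      (n : ℝ) / (Nat.card (MulAction.stabilizer F x)) := by
  classical
  haveI : H.FiniteIndex := ⟨hn ▸ hn0⟩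
  haveI : Finite (F ⧸ H) := H.finite_quotient_of_finiteIndex
  haveI := Fintype.ofFinite (F ⧸ H)
  set K := MulAction.stabilizer F x with hKdef
  haveI : Finite K := hstab x
  -- well-definedness of the membership predicate on cosets
  have wd : ∀ (e : X) (a b : F), QuotientGroup.leftRel H a b →
      ((a⁻¹ • x ∈ MulAction.orbit H e) = (b⁻¹ • x ∈ MulAction.orbit H e)) := by
    intro e a b hab
    rw [QuotientGroup.leftRel_apply] at hab
    have horb : b⁻¹ • x = (⟨a⁻¹ * b, hab⟩ : H)⁻¹ • (a⁻¹ • x) := by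
      simp [Subgroup.smul_def, smul_smul, mul_assoc]
    have horb2 : MulAction.orbit H (b⁻¹ • x) = MulAction.orbit H (a⁻¹ • x) := by
      rw [horb, MulAction.orbit_smul]
    apply propext
    rw [← MulAction.orbit_eq_iff, ← MulAction.orbit_eq_iff, horb2]
  let T : X → Set (F ⧸ H) := fun e =>
    {q | Quotient.liftOn' q (fun g => g⁻¹ • x ∈ MulAction.orbit H e) (wd e)}
  have memT : ∀ (e : X) (g : F), ((QuotientGroup.mk g : F ⧸ H) ∈ T e) ↔
      g⁻¹ • x ∈ MulAction.orbit H e := fun e g => Iff.rfl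
  -- partition property
  have hpart : ∀ q : F ⧸ H, ∃! e, e ∈ R ∧ q ∈ T e := by
    intro q
    induction q using QuotientGroup.induction_on with
    | H g =>
      obtain ⟨e, he, hu⟩ := hR (g⁻¹ • x) ⟨g⁻¹, rfl⟩
      exact ⟨e, he, fun e' he' => hu e' he'⟩
  -- counting: the fiber map
  let f : F ⧸ H → X := fun q => (hpart q).exists.choose
  have hf : ∀ q, f q ∈ R ∧ q ∈ T (f q) := fun q => (hpart q).exists.choose_spec
  have hfilter : ∀ e ∈ R, Finset.univ.filter (fun q => f q = e) =
      Finset.univ.filter (fun q => q ∈ T e) := by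
    intro e he
    ext q
    simp only [Finset.mem_filter, Finset.mem_univ, true_and]
    constructor
    · rintro rfl; exact (hf q).2
    · intro hq; exact ((hpart q).unique (hf q) ⟨he, hq⟩)
  have hsum : ∑ e ∈ R, (Finset.univ.filter (fun q => q ∈ T e)).card = n := by
    rw [← Finset.sum_congr rfl (fun e he => congrArg Finset.card (hfilter e he))]
    rw [← Finset.card_eq_sum_card_fiberwise (fun q _ => (hf q).1)]
    rw [Finset.card_univ, ← Nat.card_eq_fintype_card, ← hn]
    rfl
  -- orbit-stabilizer: for e ∈ R
  have key : ∀ e ∈ R, (Finset.univ.filter (fun q => q ∈ T e)).card *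
      Nat.card (MulAction.stabilizer H e) = Nat.card K := by
    intro e he
    obtain ⟨g₀, hg₀'⟩ := hRorb e he
    have hg₀ : g₀ • x = e := hg₀'
    set p : F ⧸ H := QuotientGroup.mk g₀⁻¹ with hp
    -- T e is the K-orbit of p
    have hTe : T e = MulAction.orbit K p := by
      ext q
      induction q using QuotientGroup.induction_on with
      | H g =>
        constructor
        · intro hq
          rw [memT] at hq
          obtain ⟨h, hh⟩ := hq
          have hhF : (h : F) • e = g⁻¹ • x := hh
          have hKmem : g * (h : F) * g₀ ∈ K := by
            rw [hKdef, MulAction.mem_stabilizer_iff]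
            rw [mul_smul, mul_smul, hg₀, hhF, smul_inv_smul]
          refine ⟨⟨g * (h : F) * g₀, hKmem⟩, ?_⟩
          show (g * (h : F) * g₀) • (QuotientGroup.mk g₀⁻¹ : F ⧸ H) = QuotientGroup.mk g
          rw [MulAction.Quotient.smul_mk, QuotientGroup.eq]
          simp only [smul_eq_mul]
          have heq : (g * (h : F) * g₀ * g₀⁻¹)⁻¹ * g = (h : F)⁻¹ := by group
          rw [heq]
          exact H.inv_mem h.2
        · intro hq
          obtain ⟨k, hk⟩ := hq
          have hk' : k • p = (QuotientGroup.mk g : F ⧸ H) := hk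
          rw [← hk']
          have hkp : (k • p : F ⧸ H) = QuotientGroup.mk ((k : F) * g₀⁻¹) := rfl
          rw [hkp, memT]
          have hkx : (k : F) • x = x := k.2
          have hxe : ((k : F) * g₀⁻¹)⁻¹ • x = e := by
            rw [mul_inv_rev, inv_inv, mul_smul, ← hkx, inv_smul_smul, hg₀]
          rw [hxe]
          exact MulAction.mem_orbit_self e
    -- stabilizers are isomorphic
    have hstabEquiv : MulAction.stabilizer K p ≃ MulAction.stabilizer H e := by
      have fwdH : ∀ k : MulAction.stabilizer K p, g₀ * ((k : K) : F) * g₀⁻¹ ∈ H := by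
        intro k
        have hk : (k : K) • p = p := k.2
        have hk2 : (QuotientGroup.mk (((k : K) : F) * g₀⁻¹) : F ⧸ H) = QuotientGroup.mk g₀⁻¹ := hk
        have hmem := H.inv_mem (QuotientGroup.eq.mp hk2)
        have heq : (((((k : K) : F) * g₀⁻¹)⁻¹ * g₀⁻¹))⁻¹ = g₀ * ((k : K) : F) * g₀⁻¹ := by group
        rwa [heq] at hmem
      have fwdStab : ∀ k : MulAction.stabilizer K p,
          (⟨g₀ * ((k : K) : F) * g₀⁻¹, fwdH k⟩ : H) ∈ MulAction.stabilizer H e := by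
        intro k
        have hkx : ((k : K) : F) • x = x := (k : K).2
        rw [MulAction.mem_stabilizer_iff]
        show (g₀ * ((k : K) : F) * g₀⁻¹) • e = e
        rw [mul_smul, mul_smul, ← hg₀, inv_smul_smul, hkx]
      have bwdK : ∀ h : MulAction.stabilizer H e, g₀⁻¹ * ((h : H) : F) * g₀ ∈ K := by
        intro h
        have hhe : ((h : H) : F) • e = e := h.2
        rw [hKdef, MulAction.mem_stabilizer_iff]
        rw [mul_smul, mul_smul, hg₀, hhe, ← hg₀, inv_smul_smul]
      have bwdStab : ∀ h : MulAction.stabilizer H e,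
          (⟨g₀⁻¹ * ((h : H) : F) * g₀, bwdK h⟩ : K) ∈ MulAction.stabilizer K p := by
        intro h
        rw [MulAction.mem_stabilizer_iff]
        show (QuotientGroup.mk ((g₀⁻¹ * ((h : H) : F) * g₀) * g₀⁻¹) : F ⧸ H) =
          QuotientGroup.mk g₀⁻¹
        rw [QuotientGroup.eq]
        have heq : ((g₀⁻¹ * ((h : H) : F) * g₀) * g₀⁻¹)⁻¹ * g₀⁻¹ = ((h : H) : F)⁻¹ := by group
        rw [heq]
        exact H.inv_mem (h : H).2
      refine ⟨fun k => ⟨⟨g₀ * ((k : K) : F) * g₀⁻¹, fwdH k⟩, fwdStab k⟩,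
        fun h => ⟨⟨g₀⁻¹ * ((h : H) : F) * g₀, bwdK h⟩, bwdStab h⟩, ?_, ?_⟩
      · intro k
        apply Subtype.ext; apply Subtype.ext
        show g₀⁻¹ * (g₀ * ((k : K) : F) * g₀⁻¹) * g₀ = ((k : K) : F)
        group
      · intro h
        apply Subtype.ext; apply Subtype.ext
        show g₀ * (g₀⁻¹ * ((h : H) : F) * g₀) * g₀⁻¹ = ((h : H) : F)
        group
    -- assemble the cardinalities
    have hos := Nat.card_congr (MulAction.orbitProdStabilizerEquivGroup K p)
    rw [Nat.card_prod] at hos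
    have h1 : (Finset.univ.filter (fun q => q ∈ T e)).card = Nat.card (T e) := by
      rw [Nat.card_eq_fintype_card, Fintype.card_subtype]
    have h2 : Nat.card (T e) = Nat.card (MulAction.orbit K p) := by rw [hTe]
    have h3 : Nat.card (MulAction.stabilizer K p) = Nat.card (MulAction.stabilizer H e) :=
      Nat.card_congr hstabEquiv
    rw [h1, h2, ← h3, hos]
  -- final real arithmetic
  have hK0 : (Nat.card K : ℝ) ≠ 0 := by
    exact_mod_cast Nat.card_pos.ne'
  have step : ∀ e ∈ R, (1 : ℝ) / (Nat.card (MulAction.stabilizer H e)) =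
      ((Finset.univ.filter (fun q => q ∈ T e)).card : ℝ) / Nat.card K := by
    intro e he
    have hkey : ((Finset.univ.filter (fun q => q ∈ T e)).card : ℝ) *
        (Nat.card (MulAction.stabilizer H e) : ℝ) = (Nat.card K : ℝ) := by
      exact_mod_cast key e he
    have hs0 : (Nat.card (MulAction.stabilizer H e) : ℝ) ≠ 0 := by
      intro h0
      rw [h0, mul_zero] at hkey
      exact hK0 hkey.symm
    rw [div_eq_div_iff hs0 hK0, one_mul, ← hkey, mul_comm]
  rw [Finset.sum_congr rfl step, ← Finset.sum_div]
  congr 1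
  exact_mod_cast hsum
end
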